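/- Let E ⊆ ℝ^d be bounded, nonempty and Borel. Then lbd E = liminf_{r→0} sup_{μ ∈ 𝒫(E)} inf_{x ∈ E} log μ(B(x,r)) / log r, and ubd E = limsup_{r→0} sup_{μ ∈ 𝒫(E)} inf_{x ∈ E} log μ(B(x,r)) / log r. -/

import Mathlib

open MeasureTheory Metric Filter Set Topology
set_option linter.unusedSectionVars false
set_option linter.unusedVariables false
set_option maxHeartbeats 1000000


/-- The topological support of a measure: points all of whose neighbourhoods
have positive measure. -/
def msupport {X : Type*} [TopologicalSpace X] [MeasurableSpace X]
    (μ : Measure X) : Set X :=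
  {x | ∀ U : Set X, IsOpen U → x ∈ U → μ U ≠ 0}

/-- The collection of Borel probability measures whose support is contained in `E`. -/
def probOn {X : Type*} [TopologicalSpace X] [MeasurableSpace X]
    (E : Set X) : Set (Measure X) :=
  {μ | IsProbabilityMeasure μ ∧ msupport μ ⊆ E}

/-- The correlation integral `∫ μ(B(x,r)) dμ(x)` (as a real number). -/
noncomputable def corrInt {X : Type*} [MetricSpace X] [MeasurableSpace X]
    (μ : Measure X) (r : ℝ) : ℝ :=
  (∫⁻ x, μ (closedBall x r) ∂μ).toReal

/-- Lower correlation dimension of a measure. -/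
noncomputable def lcod {X : Type*} [MetricSpace X] [MeasurableSpace X]
    (μ : Measure X) : ℝ :=
  liminf (fun r : ℝ => Real.log (corrInt μ r) / Real.log r) (𝓝[>] 0)

/-- Upper correlation dimension of a measure. -/
noncomputable def ucod {X : Type*} [MetricSpace X] [MeasurableSpace X]
    (μ : Measure X) : ℝ :=
  limsup (fun r : ℝ => Real.log (corrInt μ r) / Real.log r) (𝓝[>] 0)

/-- Upper correlation dimension of a set. -/
noncomputable def ucodSet {X : Type*} [MetricSpace X] [MeasurableSpace X]
    (E : Set X) : ℝ :=
  sSup (ucod '' probOn E)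

/-- `coverNum E r` is the least number of sets of diameter at most `r` needed to cover `E`. -/
noncomputable def coverNum {X : Type*} [MetricSpace X] (E : Set X) (r : ℝ) : ℕ :=
  sInf {n : ℕ | ∃ 𝒰 : Finset (Set X), 𝒰.card = n ∧
    (∀ U ∈ 𝒰, EMetric.diam U ≤ ENNReal.ofReal r) ∧ E ⊆ ⋃ U ∈ 𝒰, U}

/-- Lower box-counting dimension. -/
noncomputable def lbd {X : Type*} [MetricSpace X] (E : Set X) : ℝ :=
  liminf (fun r : ℝ => Real.log (coverNum E r : ℝ) / (-Real.log r)) (𝓝[>] 0)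

/-- Upper box-counting dimension. -/
noncomputable def ubd {X : Type*} [MetricSpace X] (E : Set X) : ℝ :=
  limsup (fun r : ℝ => Real.log (coverNum E r : ℝ) / (-Real.log r)) (𝓝[>] 0)

/-- Modified lower box dimension. -/
noncomputable def mlbd {X : Type*} [MetricSpace X] (E : Set X) : ℝ :=
  sInf {s : ℝ | ∃ F : ℕ → Set X, (∀ i, IsCompact (F i)) ∧ E ⊆ ⋃ i, F i ∧
    ∀ i, lbd (F i) ≤ s}

/-- Modified upper box dimension (= packing dimension). -/
noncomputable def mubd {X : Type*} [MetricSpace X] (E : Set X) : ℝ :=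
  sInf {s : ℝ | ∃ F : ℕ → Set X, (∀ i, IsCompact (F i)) ∧ E ⊆ ⋃ i, F i ∧
    ∀ i, ubd (F i) ≤ s}

/-- Fourier transform of a measure on Euclidean space. -/
noncomputable def ftMeas {d : ℕ} (μ : Measure (EuclideanSpace ℝ (Fin d)))
    (z : EuclideanSpace ℝ (Fin d)) : ℂ :=
  ∫ x, Complex.exp (Complex.I * (inner ℝ x z : ℝ)) ∂μ

section Aux
variable {X : Type*} [NormedAddCommGroup X] [NormedSpace ℝ X] [ProperSpace X]

lemma ediam_closedBall_le {y : X} {ρ r : ℝ} (hr : 0 ≤ r) (h : 2 * ρ ≤ r) :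
    EMetric.diam (closedBall y ρ) ≤ ENNReal.ofReal r := by
  refine EMetric.diam_le fun a ha b hb => ?_
  rw [edist_dist]
  refine ENNReal.ofReal_le_ofReal ?_
  have h1 : dist a y ≤ ρ := mem_closedBall.1 ha
  have h2 : dist b y ≤ ρ := mem_closedBall.1 hb
  calc dist a b ≤ dist a y + dist y b := dist_triangle ..
    _ ≤ ρ + ρ := by rw [dist_comm y b]; linarith
    _ ≤ r := by linarith

lemma coverNum_le_card {E : Set X} {r : ℝ} {𝒰 : Finset (Set X)}
    (hd : ∀ U ∈ 𝒰, EMetric.diam U ≤ ENNReal.ofReal r) (hc : E ⊆ ⋃ U ∈ 𝒰, U) :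
    coverNum E r ≤ 𝒰.card :=
  Nat.sInf_le ⟨𝒰, rfl, hd, hc⟩

lemma exists_doubling : ∃ K : ℕ, 1 ≤ K ∧ ∀ (x : X) (r : ℝ), 0 < r →
    ∃ t : Finset X, t.card ≤ K ∧ closedBall x r ⊆ ⋃ y ∈ t, closedBall y (r / 4) := by
  classical
  obtain ⟨t₀, ht₀⟩ : ∃ t : Finset X, closedBall (0 : X) 1 ⊆ ⋃ y ∈ t, ball y 4⁻¹ := by
    have hc : IsCompact (closedBall (0 : X) 1) := isCompact_closedBall _ _
    obtain ⟨t, ht⟩ := hc.elim_finite_subcover (fun y : X => ball y 4⁻¹)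
      (fun y => isOpen_ball) (fun z hz => mem_iUnion.2 ⟨z, mem_ball_self (by norm_num)⟩)
    exact ⟨t, ht⟩
  refine ⟨max t₀.card 1, le_max_right _ _, fun x r hr => ?_⟩
  refine ⟨t₀.image (fun y => x + r • y),
    (Finset.card_image_le).trans (le_max_left _ _), fun z hz => ?_⟩
  have hrne : r ≠ 0 := ne_of_gt hr
  have h1 : r⁻¹ • (z - x) ∈ closedBall (0 : X) 1 := by
    rw [mem_closedBall, dist_zero_right, norm_smul, norm_inv, Real.norm_eq_abs,
      abs_of_pos hr]
    have : ‖z - x‖ ≤ r := by rw [← dist_eq_norm]; exact mem_closedBall.1 hz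
    calc r⁻¹ * ‖z - x‖ ≤ r⁻¹ * r := by
          exact mul_le_mul_of_nonneg_left this (inv_nonneg.2 hr.le)
      _ = 1 := inv_mul_cancel₀ hrne
  obtain ⟨y, hy, hzy⟩ := mem_iUnion₂.1 (ht₀ h1)
  refine mem_iUnion₂.2 ⟨x + r • y, Finset.mem_image_of_mem _ hy, ?_⟩
  rw [mem_closedBall, dist_eq_norm]
  have : z - (x + r • y) = r • (r⁻¹ • (z - x) - y) := by
    rw [smul_sub, smul_smul, mul_inv_cancel₀ hrne, one_smul]; abel
  rw [this, norm_smul, Real.norm_eq_abs, abs_of_pos hr]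
  have : ‖r⁻¹ • (z - x) - y‖ ≤ 4⁻¹ := by
    rw [← dist_eq_norm]; exact (mem_ball.1 hzy).le
  calc r * ‖r⁻¹ • (z - x) - y‖ ≤ r * 4⁻¹ := mul_le_mul_of_nonneg_left this hr.le
    _ = r / 4 := by ring

lemma exists_iter_cover {K : ℕ} (hK : ∀ (x : X) (r : ℝ), 0 < r →
    ∃ t : Finset X, t.card ≤ K ∧ closedBall x r ⊆ ⋃ y ∈ t, closedBall y (r / 4)) :
    ∀ (m : ℕ) (x : X) (r : ℝ), 0 < r →
    ∃ t : Finset X, t.card ≤ K ^ m ∧ closedBall x r ⊆ ⋃ y ∈ t, closedBall y (r / 4 ^ m) := by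
  classical
  intro m
  induction m with
  | zero => intro x r hr; exact ⟨{x}, by simp, by simp⟩
  | succ m ih =>
    intro x r hr
    obtain ⟨t, htc, htcov⟩ := hK x r hr
    choose f hf1 hf2 using fun y => ih y (r / 4) (by linarith)
    refine ⟨t.biUnion f, ?_, ?_⟩
    · calc (t.biUnion f).card ≤ ∑ y ∈ t, (f y).card := Finset.card_biUnion_le
        _ ≤ ∑ _y ∈ t, K ^ m := Finset.sum_le_sum (fun y _ => hf1 y)
        _ = t.card * K ^ m := by rw [Finset.sum_const, smul_eq_mul]
        _ ≤ K * K ^ m := Nat.mul_le_mul_right _ htc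
        _ = K ^ (m + 1) := (pow_succ' K m).symm
    · intro z hz
      obtain ⟨y, hy, hzy⟩ := mem_iUnion₂.1 (htcov hz)
      obtain ⟨w, hw, hzw⟩ := mem_iUnion₂.1 (hf2 y hzy)
      refine mem_iUnion₂.2 ⟨w, Finset.mem_biUnion.2 ⟨y, hy, hw⟩, ?_⟩
      have : r / 4 / 4 ^ m = r / 4 ^ (m + 1) := by
        rw [div_div, pow_succ']
      rwa [this] at hzw

lemma packing_bound {K : ℕ} (hK : ∀ (x : X) (r : ℝ), 0 < r →
    ∃ t : Finset X, t.card ≤ K ∧ closedBall x r ⊆ ⋃ y ∈ t, closedBall y (r / 4))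
    {x : X} {r : ℝ} (hr : 0 < r) (S : Finset X)
    (hS : ∀ s ∈ S, s ∈ closedBall x r)
    (hsep : ∀ a ∈ S, ∀ b ∈ S, a ≠ b → r < dist a b) :
    S.card ≤ K := by
  obtain ⟨t, htc, hcov⟩ := hK x r hr
  have h : ∀ s ∈ S, ∃ y ∈ t, s ∈ closedBall y (r / 4) :=
    fun s hs => by simpa using mem_iUnion₂.1 (hcov (hS s hs))
  choose! f hf1 hf2 using h
  have hinj : Set.InjOn f ↑S := by
    intro a ha b hb hab
    by_contra hne
    have h1 : dist a (f a) ≤ r / 4 := mem_closedBall.1 (hf2 a ha)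
    have h2 : dist b (f b) ≤ r / 4 := mem_closedBall.1 (hf2 b hb)
    have : dist a b ≤ r / 2 := by
      calc dist a b ≤ dist a (f a) + dist (f b) b := by
            rw [hab]; exact dist_triangle ..
        _ ≤ r / 4 + r / 4 := by rw [dist_comm (f b) b]; linarith
        _ = r / 2 := by ring
    exact absurd (hsep a ha b hb hne) (by linarith)
  exact (Finset.card_le_card_of_injOn f (fun a ha => hf1 a ha) hinj).trans htc
end Aux

section Aux2
variable {X : Type*} [NormedAddCommGroup X] [NormedSpace ℝ X] [ProperSpace X]

lemma exists_maximal_separated {K : ℕ} (hK : ∀ (x : X) (r : ℝ), 0 < r →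
    ∃ t : Finset X, t.card ≤ K ∧ closedBall x r ⊆ ⋃ y ∈ t, closedBall y (r / 4))
    {E : Set X} (hb : Bornology.IsBounded E) (hne : E.Nonempty) {r : ℝ} (hr : 0 < r) :
    ∃ S : Finset X, S.Nonempty ∧ ↑S ⊆ E ∧
      (∀ a ∈ S, ∀ b ∈ S, a ≠ b → r < dist a b) ∧
      ∀ x ∈ E, ∃ s ∈ S, dist x s ≤ r := by
  classical
  obtain ⟨x₀, hx₀⟩ := hne
  obtain ⟨R, hR⟩ := hb.subset_closedBall x₀
  set R' : ℝ := max R 1 with hR'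
  have hR'pos : (0:ℝ) < R' := lt_of_lt_of_le one_pos (le_max_right _ _)
  have hER : E ⊆ closedBall x₀ R' :=
    hR.trans (closedBall_subset_closedBall (le_max_left _ _))
  -- bound on cardinality of separated sets
  obtain ⟨m, hm⟩ : ∃ m : ℕ, R' * 4 / r < 4 ^ m := pow_unbounded_of_one_lt _ (by norm_num)
  obtain ⟨t, htc, hcov⟩ := exists_iter_cover hK m x₀ R' hR'pos
  have hsmall : R' / 4 ^ m ≤ r / 4 := by
    rw [div_le_div_iff₀ (by positivity) (by norm_num)]
    rw [div_lt_iff₀ hr] at hm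
    nlinarith [pow_pos (show (0:ℝ) < 4 by norm_num) m]
  have hbound : ∀ S : Finset X, ↑S ⊆ E →
      (∀ a ∈ S, ∀ b ∈ S, a ≠ b → r < dist a b) → S.card ≤ K ^ m := by
    intro S hSE hsep
    have h : ∀ s ∈ S, ∃ y ∈ t, s ∈ closedBall y (R' / 4 ^ m) :=
      fun s hs => by simpa using mem_iUnion₂.1 (hcov (hER (hSE hs)))
    choose! f hf1 hf2 using h
    have hinj : Set.InjOn f ↑S := by
      intro a ha b hb hab
      by_contra hne'
      have h1 : dist a (f a) ≤ r / 4 := (mem_closedBall.1 (hf2 a ha)).trans hsmall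
      have h2 : dist b (f b) ≤ r / 4 := (mem_closedBall.1 (hf2 b hb)).trans hsmall
      have : dist a b ≤ r / 2 := by
        calc dist a b ≤ dist a (f a) + dist (f b) b := by rw [hab]; exact dist_triangle ..
          _ ≤ r / 4 + r / 4 := by rw [dist_comm (f b) b]; linarith
          _ = r / 2 := by ring
      exact absurd (hsep a ha b hb hne') (by linarith)
    exact (Finset.card_le_card_of_injOn f (fun a ha => hf1 a ha) hinj).trans htc
  set A : Set ℕ := {n | ∃ S : Finset X, ↑S ⊆ E ∧
    (∀ a ∈ S, ∀ b ∈ S, a ≠ b → r < dist a b) ∧ S.card = n} with hA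
  have h1A : (1:ℕ) ∈ A := ⟨{x₀}, by simpa using hx₀, by simp, by simp⟩
  have hAne : A.Nonempty := ⟨1, h1A⟩
  have hAbdd : BddAbove A := by
    refine ⟨K ^ m, fun n hn => ?_⟩
    obtain ⟨S, hSE, hsep, rfl⟩ := hn
    exact hbound S hSE hsep
  obtain ⟨S, hSE, hsep, hScard⟩ := Nat.sSup_mem hAne hAbdd
  refine ⟨S, ?_, hSE, hsep, ?_⟩
  · rw [← Finset.card_pos, hScard]
    exact lt_of_lt_of_le Nat.zero_lt_one (le_csSup hAbdd h1A)
  · intro x hx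
    by_contra hcon
    push_neg at hcon
    have hxS : x ∉ S := fun hxS => absurd (hcon x hxS) (by simp [hr.le])
    have hsep' : ∀ a ∈ insert x S, ∀ b ∈ insert x S, a ≠ b → r < dist a b := by
      intro a ha b hb hab
      rcases Finset.mem_insert.1 ha with ha' | ha' <;>
        rcases Finset.mem_insert.1 hb with hb' | hb'
      · exact absurd (ha'.trans hb'.symm) hab
      · rw [ha']; exact hcon b hb'
      · rw [hb', dist_comm]; exact hcon a ha'
      · exact hsep a ha' b hb' hab
    have hmem : (insert x S).card ∈ A :=
      ⟨insert x S, by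
        rw [Finset.coe_insert]
        exact Set.insert_subset hx hSE, hsep', rfl⟩
    have : (insert x S).card ≤ sSup A := le_csSup hAbdd hmem
    rw [Finset.card_insert_of_notMem hxS, hScard] at this
    omega
end Aux2

section Aux3
variable {X : Type*} [MetricSpace X] [SecondCountableTopology X]
  [MeasurableSpace X] [BorelSpace X]

lemma measure_msupport_compl (μ : Measure X) : μ (msupport μ)ᶜ = 0 := by
  have hcompl : (msupport μ)ᶜ = ⋃₀ {U : Set X | IsOpen U ∧ μ U = 0} := by
    ext x
    simp only [mem_compl_iff, msupport, mem_setOf_eq, not_forall, mem_sUnion]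
    constructor
    · rintro ⟨U, hU, hxU, hμU⟩
      exact ⟨U, ⟨hU, by simpa using hμU⟩, by tauto⟩
    · rintro ⟨U, ⟨hU, hμU⟩, hxU⟩
      exact ⟨U, hU, hxU, by simp [hμU]⟩
  rw [hcompl]
  obtain ⟨T, hTc, hTsub, hTU⟩ :=
    TopologicalSpace.isOpen_sUnion_countable {U : Set X | IsOpen U ∧ μ U = 0}
      (fun U hU => hU.1)
  rw [← hTU]
  exact (measure_sUnion_null_iff hTc).2 fun s hs => (hTsub hs).2

lemma probOn_measure_eq_one {E : Set X} (hE : MeasurableSet E)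
    {μ : Measure X} (hμ : μ ∈ probOn E) : μ E = 1 := by
  have h0 : μ Eᶜ = 0 :=
    measure_mono_null (compl_subset_compl.2 hμ.2) (measure_msupport_compl μ)
  have h1 : μ univ = 1 := hμ.1.measure_univ
  refine le_antisymm (h1 ▸ measure_mono (subset_univ E)) ?_
  calc (1:ENNReal) = μ univ := h1.symm
    _ ≤ μ E + μ Eᶜ := by rw [← union_compl_self E]; exact measure_union_le _ _
    _ = μ E := by rw [h0, add_zero]

lemma dirac_mem_probOn {E : Set X} {x : X} (hx : x ∈ E) :
    Measure.dirac x ∈ probOn E := by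
  refine ⟨by infer_instance, fun y hy => ?_⟩
  by_contra hyE
  have hyx : y ≠ x := fun h => hyE (h ▸ hx)
  have hU : IsOpen ({x}ᶜ : Set X) := isOpen_compl_singleton
  have := hy _ hU (by simpa using hyx)
  rw [Measure.dirac_apply' _ hU.measurableSet] at this
  exact this (by simp)

noncomputable def unifOn (S : Finset X) : Measure X :=
  (S.card : ENNReal)⁻¹ • ∑ s ∈ S, Measure.dirac s

lemma unifOn_apply (S : Finset X) {A : Set X} [DecidablePred (· ∈ A)]
    (hA : MeasurableSet A) :
    unifOn S A = ((S.filter (· ∈ A)).card : ENNReal) * (S.card : ENNReal)⁻¹ := by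
  rw [unifOn, Measure.smul_apply, Measure.finset_sum_apply, smul_eq_mul, mul_comm]
  congr 1
  calc ∑ s ∈ S, Measure.dirac s A
      = ∑ s ∈ S, A.indicator (fun _ => (1:ENNReal)) s :=
        Finset.sum_congr rfl fun s _ => Measure.dirac_apply' s hA
    _ = ∑ s ∈ S.filter (· ∈ A), 1 := by
        rw [Finset.sum_indicator_eq_sum_filter]
    _ = ((S.filter (· ∈ A)).card : ENNReal) := by
        simp

lemma unifOn_mem_probOn {E : Set X} {S : Finset X} (hS : S.Nonempty)
    (hSE : ↑S ⊆ E) : unifOn S ∈ probOn E := by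
  classical
  have hcard : (S.card : ENNReal) ≠ 0 := by
    simpa using Finset.card_ne_zero_of_mem hS.choose_spec
  constructor
  · constructor
    rw [unifOn_apply S MeasurableSet.univ,
      Finset.filter_true_of_mem (fun s _ => mem_univ s)]
    exact ENNReal.mul_inv_cancel hcard (ENNReal.natCast_ne_top _)
  · intro y hy
    by_contra hyE
    have hyS : y ∉ (↑S : Set X) := fun h => hyE (hSE h)
    have hU : IsOpen ((↑S : Set X)ᶜ) := S.finite_toSet.isClosed.isOpen_compl
    have hne := hy _ hU hyS
    rw [unifOn_apply S hU.measurableSet] at hne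
    refine hne ?_
    have hf : S.filter (· ∈ ((↑S : Set X)ᶜ)) = ∅ :=
      Finset.filter_false_of_mem fun s hs => by simp [Finset.mem_coe.2 hs]
    rw [hf]
    simp
end Aux3

section Aux4
variable {X : Type*} [NormedAddCommGroup X] [NormedSpace ℝ X] [ProperSpace X]
  [SecondCountableTopology X] [MeasurableSpace X] [BorelSpace X]

lemma exists_cover {K : ℕ} (hK : ∀ (x : X) (r : ℝ), 0 < r →
    ∃ t : Finset X, t.card ≤ K ∧ closedBall x r ⊆ ⋃ y ∈ t, closedBall y (r / 4))
    {E : Set X} (hb : Bornology.IsBounded E) {r : ℝ} (hr0 : 0 < r) :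
    ∃ 𝒰 : Finset (Set X), (∀ U ∈ 𝒰, EMetric.diam U ≤ ENNReal.ofReal r) ∧
      E ⊆ ⋃ U ∈ 𝒰, U := by
  classical
  rcases E.eq_empty_or_nonempty with rfl | ⟨x₀, hx₀⟩
  · exact ⟨∅, by simp, by simp⟩
  obtain ⟨R, hR⟩ := hb.subset_closedBall x₀
  set R' : ℝ := max R 1 with hR'def
  have hR'pos : (0:ℝ) < R' := lt_of_lt_of_le one_pos (le_max_right _ _)
  have hER : E ⊆ closedBall x₀ R' :=
    hR.trans (closedBall_subset_closedBall (le_max_left _ _))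
  obtain ⟨m, hm⟩ : ∃ m : ℕ, R' * 2 / r < 4 ^ m := pow_unbounded_of_one_lt _ (by norm_num)
  obtain ⟨t, htc, hcov⟩ := exists_iter_cover hK m x₀ R' hR'pos
  have hsmall : 2 * (R' / 4 ^ m) ≤ r := by
    rw [div_lt_iff₀ hr0] at hm
    have h4 : (0:ℝ) < 4 ^ m := by positivity
    rw [mul_div_assoc', div_le_iff₀ h4]
    nlinarith
  refine ⟨t.image (fun y => closedBall y (R' / 4 ^ m)), ?_, ?_⟩
  · intro U hU
    obtain ⟨y, _, rfl⟩ := Finset.mem_image.1 hU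
    exact ediam_closedBall_le hr0.le hsmall
  · intro z hz
    obtain ⟨y, hy, hzy⟩ := mem_iUnion₂.1 (hcov (hER hz))
    exact mem_iUnion₂.2 ⟨_, Finset.mem_image_of_mem _ hy, hzy⟩

lemma one_le_coverNum {E : Set X} (hne : E.Nonempty) {r : ℝ}
    (hcov : ∃ 𝒰 : Finset (Set X), (∀ U ∈ 𝒰, EMetric.diam U ≤ ENNReal.ofReal r) ∧
      E ⊆ ⋃ U ∈ 𝒰, U) : 1 ≤ coverNum E r := by
  obtain ⟨𝒰₀, h1, h2⟩ := hcov
  have hmem : coverNum E r ∈ {n : ℕ | ∃ 𝒰 : Finset (Set X), 𝒰.card = n ∧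
      (∀ U ∈ 𝒰, EMetric.diam U ≤ ENNReal.ofReal r) ∧ E ⊆ ⋃ U ∈ 𝒰, U} :=
    Nat.sInf_mem ⟨𝒰₀.card, 𝒰₀, rfl, h1, h2⟩
  obtain ⟨𝒰, hcard, _, hc⟩ := hmem
  obtain ⟨x₀, hx₀⟩ := hne
  obtain ⟨U, hU, _⟩ := mem_iUnion₂.1 (hc hx₀)
  rw [← hcard]
  exact Finset.card_pos.2 ⟨U, hU⟩

lemma keyA {E : Set X} (hne : E.Nonempty) (hE : MeasurableSet E) {r : ℝ}
    (hr0 : 0 < r) (hr1 : r < 1)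
    (hcov : ∃ 𝒰 : Finset (Set X), (∀ U ∈ 𝒰, EMetric.diam U ≤ ENNReal.ofReal r) ∧
      E ⊆ ⋃ U ∈ 𝒰, U)
    {μ : Measure X} (hμ : μ ∈ probOn E) :
    sInf ((fun x => Real.log ((μ (closedBall x r)).toReal) / Real.log r) '' E) ≤
      Real.log (coverNum E r) / (-Real.log r) := by
  classical
  have hlogr : Real.log r < 0 := Real.log_neg hr0 hr1
  haveI : IsProbabilityMeasure μ := hμ.1
  obtain ⟨𝒰₀, h1, h2⟩ := hcov
  have hmem : coverNum E r ∈ {n : ℕ | ∃ 𝒰 : Finset (Set X), 𝒰.card = n ∧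
      (∀ U ∈ 𝒰, EMetric.diam U ≤ ENNReal.ofReal r) ∧ E ⊆ ⋃ U ∈ 𝒰, U} :=
    Nat.sInf_mem ⟨𝒰₀.card, 𝒰₀, rfl, h1, h2⟩
  obtain ⟨𝒰, h𝒰card, h𝒰d, h𝒰cov⟩ := hmem
  set N := coverNum E r with hN
  set 𝒱 : Finset (Set X) := 𝒰.filter (fun U => (U ∩ E).Nonempty) with h𝒱
  have hpick : ∀ U ∈ 𝒱, ∃ x, x ∈ U ∩ E := fun U hU => (Finset.mem_filter.1 hU).2
  choose! xc hxc using hpick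
  have h𝒱ne : 𝒱.Nonempty := by
    obtain ⟨x₀, hx₀⟩ := hne
    obtain ⟨U, hU, hxU⟩ := mem_iUnion₂.1 (h𝒰cov hx₀)
    exact ⟨U, Finset.mem_filter.2 ⟨hU, ⟨x₀, hxU, hx₀⟩⟩⟩
  have hEsub : E ⊆ ⋃ U ∈ 𝒱, closedBall (xc U) r := by
    intro e he
    obtain ⟨U, hU, heU⟩ := mem_iUnion₂.1 (h𝒰cov he)
    have hU𝒱 : U ∈ 𝒱 := Finset.mem_filter.2 ⟨hU, ⟨e, heU, he⟩⟩
    refine mem_iUnion₂.2 ⟨U, hU𝒱, ?_⟩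
    rw [mem_closedBall, ← edist_le_ofReal hr0.le]
    exact le_trans (EMetric.edist_le_diam_of_mem heU (hxc U hU𝒱).1) (h𝒰d U hU)
  have hcne : (𝒱.card : ENNReal) ≠ 0 := by
    simpa using Finset.card_ne_zero_of_mem h𝒱ne.choose_spec
  obtain ⟨U, hU𝒱, hUmax⟩ :=
    𝒱.exists_max_image (fun U => μ (closedBall (xc U) r)) h𝒱ne
  have hsum2 : (1:ENNReal) ≤ 𝒱.card * μ (closedBall (xc U) r) := by
    calc (1:ENNReal) = μ E := (probOn_measure_eq_one hE hμ).symm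
      _ ≤ μ (⋃ V ∈ 𝒱, closedBall (xc V) r) := measure_mono hEsub
      _ ≤ ∑ V ∈ 𝒱, μ (closedBall (xc V) r) := measure_biUnion_finset_le _ _
      _ ≤ ∑ _V ∈ 𝒱, μ (closedBall (xc U) r) :=
          Finset.sum_le_sum fun V hV => hUmax V hV
      _ = 𝒱.card * μ (closedBall (xc U) r) := by
          rw [Finset.sum_const, nsmul_eq_mul]
  have hUge : (𝒱.card : ENNReal)⁻¹ ≤ μ (closedBall (xc U) r) := by
    calc (𝒱.card : ENNReal)⁻¹ = (𝒱.card : ENNReal)⁻¹ * 1 := (mul_one _).symm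
      _ ≤ (𝒱.card : ENNReal)⁻¹ * (𝒱.card * μ (closedBall (xc U) r)) :=
          mul_le_mul_right hsum2 _
      _ = ((𝒱.card : ENNReal)⁻¹ * 𝒱.card) * μ (closedBall (xc U) r) :=
          (mul_assoc _ _ _).symm
      _ = μ (closedBall (xc U) r) := by
          rw [ENNReal.inv_mul_cancel hcne (ENNReal.natCast_ne_top _), one_mul]
  have hN1 : 1 ≤ N := by
    rw [← h𝒰card]
    exact Finset.card_pos.2 ⟨U, Finset.mem_filter.1 hU𝒱 |>.1⟩
  have hNpos : (0:ℝ) < (N:ℝ) := by exact_mod_cast hN1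
  have hμB : ((N:ENNReal))⁻¹ ≤ μ (closedBall (xc U) r) := by
    refine le_trans ?_ hUge
    refine ENNReal.inv_le_inv.2 ?_
    exact_mod_cast h𝒰card ▸ (Finset.card_filter_le _ _)
  have hμB1 : μ (closedBall (xc U) r) ≤ 1 := prob_le_one
  have hto : ((N:ℝ))⁻¹ ≤ (μ (closedBall (xc U) r)).toReal := by
    have h := ENNReal.toReal_mono (ne_top_of_le_ne_top ENNReal.one_ne_top hμB1) hμB
    rwa [ENNReal.toReal_inv, ENNReal.toReal_natCast] at h
  have hlog : Real.log ((N:ℝ))⁻¹ ≤ Real.log ((μ (closedBall (xc U) r)).toReal) :=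
    Real.log_le_log (by positivity) hto
  rw [Real.log_inv] at hlog
  have hval : Real.log ((μ (closedBall (xc U) r)).toReal) / Real.log r ≤
      Real.log (N:ℝ) / (-Real.log r) := by
    rw [show Real.log ((μ (closedBall (xc U) r)).toReal) / Real.log r =
      (-Real.log ((μ (closedBall (xc U) r)).toReal)) / (-Real.log r) by
        rw [neg_div_neg_eq]]
    gcongr
    · linarith
    · linarith
  refine le_trans (csInf_le ?_ ⟨xc U, (hxc U hU𝒱).2, rfl⟩) hval
  refine ⟨0, ?_⟩
  rintro v ⟨x, hx, rfl⟩
  refine div_nonneg_of_nonpos ?_ hlogr.le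
  refine Real.log_nonpos ENNReal.toReal_nonneg ?_
  calc (μ (closedBall x r)).toReal ≤ (1:ENNReal).toReal :=
        ENNReal.toReal_mono ENNReal.one_ne_top prob_le_one
    _ = 1 := ENNReal.toReal_one
end Aux4

section Aux5
variable {X : Type*} [NormedAddCommGroup X] [NormedSpace ℝ X] [ProperSpace X]
  [SecondCountableTopology X] [MeasurableSpace X] [BorelSpace X]

lemma keyB {E : Set X} (hb : Bornology.IsBounded E) (hne : E.Nonempty)
    (hE : MeasurableSet E) {r : ℝ} (hr0 : 0 < r) (hr1 : r < 1)
    {K : ℕ} (hK1 : 1 ≤ K) (hK : ∀ (x : X) (r : ℝ), 0 < r →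
      ∃ t : Finset X, t.card ≤ K ∧ closedBall x r ⊆ ⋃ y ∈ t, closedBall y (r / 4)) :
    (Real.log (coverNum E (2 * r)) - Real.log K) / (-Real.log r) ≤
      sSup ((fun μ : Measure X =>
        sInf ((fun x => Real.log ((μ (closedBall x r)).toReal) / Real.log r) '' E))
        '' probOn E) := by
  classical
  have hlogr : Real.log r < 0 := Real.log_neg hr0 hr1
  have hnlogr : 0 < -Real.log r := by linarith
  obtain ⟨S, hSne, hSE, hsep, hmax⟩ := exists_maximal_separated hK hb hne hr0
  have hScard0 : 0 < S.card := Finset.card_pos.2 hSne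
  have hScardR : (0:ℝ) < (S.card : ℝ) := by exact_mod_cast hScard0
  have hKR : (0:ℝ) < (K:ℝ) := by exact_mod_cast hK1
  have hbdd : BddAbove ((fun μ : Measure X =>
      sInf ((fun x => Real.log ((μ (closedBall x r)).toReal) / Real.log r) '' E))
      '' probOn E) := by
    refine ⟨Real.log (coverNum E r) / (-Real.log r), ?_⟩
    rintro v ⟨ν, hν, rfl⟩
    exact keyA hne hE hr0 hr1 (exists_cover hK hb hr0) hν
  have hval : (Real.log (S.card : ℝ) - Real.log (K : ℝ)) / (-Real.log r) ≤
      sInf ((fun x => Real.log (((unifOn S) (closedBall x r)).toReal) / Real.log r) '' E) := by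
    refine le_csInf (hne.image _) ?_
    rintro v ⟨x, hx, rfl⟩
    have hB : MeasurableSet (closedBall x r) := measurableSet_closedBall
    set F : Finset X := S.filter (· ∈ closedBall x r) with hF
    have happ : (unifOn S) (closedBall x r) =
        (F.card : ENNReal) * (S.card : ENNReal)⁻¹ := unifOn_apply S hB
    have hF1 : 1 ≤ F.card := by
      obtain ⟨s₀, hs₀S, hs₀d⟩ := hmax x hx
      refine Finset.card_pos.2 ⟨s₀, Finset.mem_filter.2 ⟨hs₀S, ?_⟩⟩
      rw [mem_closedBall, dist_comm]
      exact hs₀d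
    have hFK : F.card ≤ K := by
      refine packing_bound hK hr0 F (fun s hs => (Finset.mem_filter.1 hs).2) ?_
      intro a ha b hb hab
      exact hsep a (Finset.mem_filter.1 ha).1 b (Finset.mem_filter.1 hb).1 hab
    have hFR : (0:ℝ) < (F.card : ℝ) := by exact_mod_cast hF1
    have htoReal : ((unifOn S) (closedBall x r)).toReal = (F.card : ℝ) / (S.card : ℝ) := by
      rw [happ, ENNReal.toReal_mul, ENNReal.toReal_inv, ENNReal.toReal_natCast,
        ENNReal.toReal_natCast, div_eq_mul_inv]
    have hFK' : (F.card : ℝ) ≤ (K : ℝ) := by exact_mod_cast hFK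
    have hdiv : (F.card : ℝ) / (S.card : ℝ) ≤ (K : ℝ) / (S.card : ℝ) := by gcongr
    have hlog : Real.log ((F.card : ℝ) / (S.card : ℝ)) ≤
        Real.log (K : ℝ) - Real.log (S.card : ℝ) := by
      rw [← Real.log_div hKR.ne' hScardR.ne']
      exact Real.log_le_log (by positivity) hdiv
    show (Real.log (S.card : ℝ) - Real.log (K : ℝ)) / (-Real.log r) ≤
      Real.log (((unifOn S) (closedBall x r)).toReal) / Real.log r
    rw [htoReal,
      show Real.log ((F.card : ℝ) / (S.card : ℝ)) / Real.log r =
        (-Real.log ((F.card : ℝ) / (S.card : ℝ))) / (-Real.log r) from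
        (neg_div_neg_eq _ _).symm]
    rw [div_le_div_iff_of_pos_right hnlogr]
    linarith
  have hmemS : sInf ((fun x => Real.log (((unifOn S) (closedBall x r)).toReal) / Real.log r) '' E)
      ∈ ((fun μ : Measure X =>
        sInf ((fun x => Real.log ((μ (closedBall x r)).toReal) / Real.log r) '' E))
        '' probOn E) := ⟨unifOn S, unifOn_mem_probOn hSne hSE, rfl⟩
  have h2 := hval.trans (le_csSup hbdd hmemS)
  refine le_trans ?_ h2
  rw [div_le_div_iff_of_pos_right hnlogr]
  have hcovS : ∃ 𝒰 : Finset (Set X), (∀ U ∈ 𝒰, EMetric.diam U ≤ ENNReal.ofReal (2*r)) ∧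
      E ⊆ ⋃ U ∈ 𝒰, U := by
    refine ⟨S.image (fun s => closedBall s r), ?_, ?_⟩
    · intro U hU
      obtain ⟨s, _, rfl⟩ := Finset.mem_image.1 hU
      exact ediam_closedBall_le (by linarith) le_rfl
    · intro x hx
      obtain ⟨s, hsS, hsd⟩ := hmax x hx
      exact mem_iUnion₂.2 ⟨closedBall s r, Finset.mem_image_of_mem _ hsS,
        mem_closedBall.2 hsd⟩
  have hcov2 : coverNum E (2*r) ≤ S.card := by
    obtain ⟨𝒰, hd, hc⟩ := hcovS
    calc coverNum E (2*r) ≤ (S.image (fun s => closedBall s r)).card := by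
          refine coverNum_le_card ?_ ?_
          · intro U hU
            obtain ⟨s, _, rfl⟩ := Finset.mem_image.1 hU
            exact ediam_closedBall_le (by linarith) le_rfl
          · intro x hx
            obtain ⟨s, hsS, hsd⟩ := hmax x hx
            exact mem_iUnion₂.2 ⟨closedBall s r, Finset.mem_image_of_mem _ hsS,
              mem_closedBall.2 hsd⟩
      _ ≤ S.card := Finset.card_image_le
  have hN2 : 1 ≤ coverNum E (2*r) := one_le_coverNum hne hcovS
  have : Real.log ((coverNum E (2*r) : ℝ)) ≤ Real.log (S.card : ℝ) := by
    refine Real.log_le_log ?_ ?_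
    · exact_mod_cast Nat.lt_of_lt_of_le Nat.zero_lt_one hN2
    · exact_mod_cast hcov2
  linarith
end Aux5

section Aux6
variable {X : Type*} [NormedAddCommGroup X] [NormedSpace ℝ X] [ProperSpace X]

lemma u_bound {E : Set X} (hb : Bornology.IsBounded E) (hne : E.Nonempty)
    {K : ℕ} (hK1 : 1 ≤ K) (hK : ∀ (x : X) (r : ℝ), 0 < r →
      ∃ t : Finset X, t.card ≤ K ∧ closedBall x r ⊆ ⋃ y ∈ t, closedBall y (r / 4)) :
    ∃ M : ℝ, 0 ≤ M ∧ ∀ᶠ r in 𝓝[>] (0:ℝ),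
      Real.log (coverNum E r) / (-Real.log r) ≤ M := by
  classical
  obtain ⟨x₀, hx₀⟩ := hne
  obtain ⟨R, hR⟩ := hb.subset_closedBall x₀
  set R' : ℝ := max R 1 with hR'def
  have hR'1 : (1:ℝ) ≤ R' := le_max_right _ _
  have hR'pos : (0:ℝ) < R' := lt_of_lt_of_le one_pos hR'1
  have hER : E ⊆ closedBall x₀ R' :=
    hR.trans (closedBall_subset_closedBall (le_max_left _ _))
  have hKR : (1:ℝ) ≤ (K:ℝ) := by exact_mod_cast hK1
  have hlogK : 0 ≤ Real.log K := Real.log_nonneg hKR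
  have hlog4 : 0 < Real.log 4 := Real.log_pos (by norm_num)
  have hlog2R' : 0 ≤ Real.log (2 * R') := Real.log_nonneg (by linarith)
  set c : ℝ := Real.log K / Real.log 4 with hc
  refine ⟨c + 1, by positivity, ?_⟩
  -- pointwise bound by an explicit function B'
  have hpoint : ∀ r : ℝ, r ∈ Set.Ioo (0:ℝ) 1 →
      Real.log (coverNum E r) / (-Real.log r) ≤
        c * ((Real.log (2*R') + Real.log 4) / (-Real.log r) + 1) := by
    intro r ⟨hr0, hr1⟩
    have hlogr : Real.log r < 0 := Real.log_neg hr0 hr1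
    have hnlogr : 0 < -Real.log r := by linarith
    set m : ℕ := ⌈(Real.log (2*R') - Real.log r) / Real.log 4⌉₊ with hm
    have hargnn : 0 ≤ (Real.log (2*R') - Real.log r) / Real.log 4 := div_nonneg (by linarith) hlog4.le
    have hmge : (Real.log (2*R') - Real.log r) / Real.log 4 ≤ (m:ℝ) := Nat.le_ceil _
    have hmle : (m:ℝ) ≤ (Real.log (2*R') - Real.log r) / Real.log 4 + 1 :=
      (Nat.ceil_lt_add_one hargnn).le
    have h4pos : (0:ℝ) < 4 ^ m := by positivity
    have hsmall : 2 * (R' / 4 ^ m) ≤ r := by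
      have h1 : Real.log (2*R') ≤ Real.log r + m * Real.log 4 := by
        rw [div_le_iff₀ hlog4] at hmge
        linarith
      have h2 : Real.log (2*R') ≤ Real.log (r * 4 ^ m) := by
        rw [Real.log_mul (ne_of_gt hr0) (ne_of_gt h4pos), Real.log_pow]
        exact h1
      have h3 : 2 * R' ≤ r * 4 ^ m :=
        (Real.log_le_log_iff (by linarith) (by positivity)).1 h2
      rw [mul_div_assoc', div_le_iff₀ h4pos]
      linarith
    obtain ⟨t, htc, hcov⟩ := exists_iter_cover hK m x₀ R' hR'pos
    have hcovset : ∀ U ∈ t.image (fun y => closedBall y (R' / 4 ^ m)),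
        EMetric.diam U ≤ ENNReal.ofReal r := by
      intro U hU
      obtain ⟨y, _, rfl⟩ := Finset.mem_image.1 hU
      exact ediam_closedBall_le hr0.le hsmall
    have hcovE : E ⊆ ⋃ U ∈ t.image (fun y => closedBall y (R' / 4 ^ m)), U := by
      intro z hz
      obtain ⟨y, hy, hzy⟩ := mem_iUnion₂.1 (hcov (hER hz))
      exact mem_iUnion₂.2 ⟨_, Finset.mem_image_of_mem _ hy, hzy⟩
    have hNle : coverNum E r ≤ K ^ m :=
      le_trans (coverNum_le_card hcovset hcovE)
        (le_trans Finset.card_image_le htc)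
    have hlogN : Real.log (coverNum E r) ≤ (m:ℝ) * Real.log K := by
      rcases Nat.eq_zero_or_pos (coverNum E r) with h0 | hpos
      · rw [h0]
        simp only [Nat.cast_zero, Real.log_zero]
        positivity
      · calc Real.log (coverNum E r) ≤ Real.log ((K:ℝ) ^ m) := by
              refine Real.log_le_log (by exact_mod_cast hpos) ?_
              exact_mod_cast hNle
          _ = (m:ℝ) * Real.log K := by
              rw [show ((K:ℝ) ^ m) = ((K:ℝ)) ^ (m:ℕ) from rfl, Real.log_pow]
    have step1 : Real.log (coverNum E r) / (-Real.log r) ≤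
        ((Real.log (2*R') - Real.log r) / Real.log 4 + 1) * Real.log K / (-Real.log r) := by
      rw [div_le_div_iff_of_pos_right hnlogr]
      calc Real.log (coverNum E r) ≤ (m:ℝ) * Real.log K := hlogN
        _ ≤ ((Real.log (2*R') - Real.log r) / Real.log 4 + 1) * Real.log K :=
            mul_le_mul_of_nonneg_right hmle hlogK
    refine step1.trans (le_of_eq ?_)
    rw [hc]
    field_simp [hlogr.ne, hlog4.ne']
    ring
  have h1 : Tendsto (fun r : ℝ => -Real.log r) (𝓝[>] (0:ℝ)) atTop :=
    tendsto_neg_atBot_atTop.comp Real.tendsto_log_nhdsGT_zero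
  have h2 : Tendsto (fun r : ℝ => (Real.log (2*R') + Real.log 4) / (-Real.log r))
      (𝓝[>] (0:ℝ)) (𝓝 0) := tendsto_const_nhds.div_atTop h1
  have h3 : Tendsto (fun r : ℝ => c * ((Real.log (2*R') + Real.log 4) / (-Real.log r) + 1))
      (𝓝[>] (0:ℝ)) (𝓝 c) := by
    have ha : Tendsto (fun r : ℝ => (Real.log (2*R') + Real.log 4) / (-Real.log r) + 1)
        (𝓝[>] (0:ℝ)) (𝓝 (0 + 1)) := h2.add tendsto_const_nhds
    have hb' := ha.const_mul c
    simpa using hb'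
  have h4 : ∀ᶠ r in 𝓝[>] (0:ℝ),
      c * ((Real.log (2*R') + Real.log 4) / (-Real.log r) + 1) ≤ c + 1 :=
    h3.eventually (eventually_le_nhds (lt_add_one c))
  have h5 : ∀ᶠ r in 𝓝[>] (0:ℝ), r ∈ Set.Ioo (0:ℝ) 1 :=
    Ioo_mem_nhdsGT_of_mem ⟨le_refl _, one_pos⟩
  filter_upwards [h4, h5] with r h4r h5r
  exact (hpoint r h5r).trans h4r
end Aux6

section Aux7

lemma real_le_of_forall_pos {a b : ℝ} (h : ∀ ε > 0, a ≤ b + ε) : a ≤ b := by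
  by_contra hc
  push_neg at hc
  have := h ((a - b) / 2) (by linarith)
  linarith

lemma liminf_map_eq {α β : Type*} (f : Filter α) (m : α → β) (u : β → ℝ) :
    Filter.liminf u (Filter.map m f) = Filter.liminf (fun x => u (m x)) f := by
  unfold Filter.liminf
  rw [Filter.map_map]
  rfl

lemma limsup_map_eq {α β : Type*} (f : Filter α) (m : α → β) (u : β → ℝ) :
    Filter.limsup u (Filter.map m f) = Filter.limsup (fun x => u (m x)) f := by
  unfold Filter.limsup
  rw [Filter.map_map]
  rfl

lemma map_two_mul_nhdsWithin :
    Filter.map (fun r : ℝ => 2 * r) (𝓝[>] (0:ℝ)) = 𝓝[>] (0:ℝ) := by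
  have tcont : ∀ c : ℝ, 0 < c → Tendsto (fun r : ℝ => c * r) (𝓝[>] (0:ℝ)) (𝓝[>] (0:ℝ)) := by
    intro c hc
    refine tendsto_nhdsWithin_iff.2 ⟨?_, ?_⟩
    · have h := ((continuous_mul_left c).tendsto 0).mono_left
        (nhdsWithin_le_nhds (s := Set.Ioi (0:ℝ)))
      simpa using h
    · exact eventually_mem_nhdsWithin.mono fun r hr => mul_pos hc hr
  refine le_antisymm (tcont 2 two_pos) ?_
  have hcomp : (fun r : ℝ => 2 * (2⁻¹ * r)) = fun r : ℝ => r := funext fun r => by ring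
  calc 𝓝[>] (0:ℝ) = Filter.map (fun r : ℝ => 2 * (2⁻¹ * r)) (𝓝[>] (0:ℝ)) := by
        rw [hcomp, Filter.map_id']
    _ = Filter.map (fun r : ℝ => 2 * r) (Filter.map (fun r : ℝ => 2⁻¹ * r) (𝓝[>] (0:ℝ))) :=
        (Filter.map_map).symm
    _ ≤ Filter.map (fun r : ℝ => 2 * r) (𝓝[>] (0:ℝ)) :=
        Filter.map_mono (tcont 2⁻¹ (by norm_num))

end Aux7

theorem stmt5 {d : ℕ} (E : Set (EuclideanSpace ℝ (Fin d)))
    (hb : Bornology.IsBounded E) (hne : E.Nonempty) (hE : MeasurableSet E) :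
    lbd E = liminf (fun r : ℝ => sSup ((fun μ : Measure (EuclideanSpace ℝ (Fin d)) =>
        sInf ((fun x => Real.log ((μ (closedBall x r)).toReal) / Real.log r) '' E))
        '' probOn E)) (𝓝[>] 0) ∧
    ubd E = limsup (fun r : ℝ => sSup ((fun μ : Measure (EuclideanSpace ℝ (Fin d)) =>
        sInf ((fun x => Real.log ((μ (closedBall x r)).toReal) / Real.log r) '' E))
        '' probOn E)) (𝓝[>] 0) := by
    classical
  obtain ⟨K, hK1, hK⟩ := exists_doubling (X := EuclideanSpace ℝ (Fin d))
  obtain ⟨x₀, hx₀⟩ := id hne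
  set l : Filter ℝ := 𝓝[>] (0:ℝ) with hl
  set u : ℝ → ℝ := fun r => Real.log (coverNum E r : ℝ) / (-Real.log r) with hu
  set g : ℝ → ℝ := fun r : ℝ => sSup ((fun μ : Measure (EuclideanSpace ℝ (Fin d)) =>
      sInf ((fun x => Real.log ((μ (closedBall x r)).toReal) / Real.log r) '' E))
      '' probOn E) with hg
  set w : ℝ → ℝ := fun r => u (2 * r) with hw
  have hKR : (1:ℝ) ≤ (K:ℝ) := by exact_mod_cast hK1
  have hlogK : 0 ≤ Real.log K := Real.log_nonneg hKR
  have hIoo : ∀ᶠ r in l, r ∈ Set.Ioo (0:ℝ) 1 :=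
    Ioo_mem_nhdsGT_of_mem ⟨le_refl _, one_pos⟩
  have hIoo2 : ∀ᶠ r in l, r ∈ Set.Ioo (0:ℝ) (1/2) :=
    Ioo_mem_nhdsGT_of_mem ⟨le_refl _, by norm_num⟩
  obtain ⟨M, hM0, hMev⟩ := u_bound hb ⟨x₀, hx₀⟩ hK1 hK
  have ev0u : ∀ᶠ r in l, 0 ≤ u r := by
    filter_upwards [hIoo] with r hr
    exact div_nonneg (Real.log_natCast_nonneg _)
      (by have := Real.log_neg hr.1 hr.2; linarith)
  -- nonnegativity of the inner sInf values
  have evval0 : ∀ r : ℝ, r ∈ Set.Ioo (0:ℝ) 1 →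
      ∀ μ ∈ probOn E,
      (0:ℝ) ≤ sInf ((fun x => Real.log ((μ (closedBall x r)).toReal) / Real.log r) '' E) := by
    intro r hr μ hμ
    haveI : IsProbabilityMeasure μ := hμ.1
    have hlogr : Real.log r < 0 := Real.log_neg hr.1 hr.2
    refine le_csInf (hne.image _) ?_
    rintro v ⟨x, hx, rfl⟩
    refine div_nonneg_of_nonpos ?_ hlogr.le
    refine Real.log_nonpos ENNReal.toReal_nonneg ?_
    calc (μ (closedBall x r)).toReal ≤ (1:ENNReal).toReal :=
          ENNReal.toReal_mono ENNReal.one_ne_top prob_le_one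
      _ = 1 := ENNReal.toReal_one
  have ev1 : ∀ᶠ r in l, g r ≤ u r := by
    filter_upwards [hIoo] with r hr
    refine csSup_le ⟨_, ⟨Measure.dirac x₀, dirac_mem_probOn hx₀, rfl⟩⟩ ?_
    rintro v ⟨ν, hν, rfl⟩
    exact keyA ⟨x₀, hx₀⟩ hE hr.1 hr.2 (exists_cover hK hb hr.1) hν
  have ev0g : ∀ᶠ r in l, 0 ≤ g r := by
    filter_upwards [hIoo] with r hr
    have hbdd : BddAbove ((fun μ : Measure (EuclideanSpace ℝ (Fin d)) =>
        sInf ((fun x => Real.log ((μ (closedBall x r)).toReal) / Real.log r) '' E))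
        '' probOn E) := by
      refine ⟨Real.log (coverNum E r) / (-Real.log r), ?_⟩
      rintro v ⟨ν, hν, rfl⟩
      exact keyA ⟨x₀, hx₀⟩ hE hr.1 hr.2 (exists_cover hK hb hr.1) hν
    refine le_trans (evval0 r hr _ (dirac_mem_probOn hx₀)) ?_
    exact le_csSup hbdd ⟨Measure.dirac x₀, dirac_mem_probOn hx₀, rfl⟩
  have evMg : ∀ᶠ r in l, g r ≤ M := by
    filter_upwards [ev1, hMev] with r h1 h2 using h1.trans h2
  have hmap : Filter.map (fun r : ℝ => 2 * r) l = l := map_two_mul_nhdsWithin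
  have evMw : ∀ᶠ r in l, w r ≤ M := by
    have h : ∀ᶠ y in Filter.map (fun r : ℝ => 2 * r) l, u y ≤ M := by rw [hmap]; exact hMev
    exact Filter.eventually_map.1 h
  have ev0w : ∀ᶠ r in l, 0 ≤ w r := by
    have h : ∀ᶠ y in Filter.map (fun r : ℝ => 2 * r) l, 0 ≤ u y := by rw [hmap]; exact ev0u
    exact Filter.eventually_map.1 h
  have h1atTop : Tendsto (fun r : ℝ => -Real.log r) l atTop :=
    tendsto_neg_atBot_atTop.comp Real.tendsto_log_nhdsGT_zero
  have ev2 : ∀ ε : ℝ, 0 < ε → ∀ᶠ r in l, w r - ε ≤ g r := by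
    intro ε hε
    set c' : ℝ := M * Real.log 2 + Real.log K with hc'
    have hc'0 : 0 ≤ c' := by
      have := Real.log_nonneg (by norm_num : (1:ℝ) ≤ 2)
      have := hM0
      positivity
    have htend : Tendsto (fun r : ℝ => c' / (-Real.log r)) l (𝓝 0) :=
      tendsto_const_nhds.div_atTop h1atTop
    have evsmall : ∀ᶠ r in l, c' / (-Real.log r) ≤ ε :=
      htend.eventually (eventually_le_nhds hε)
    filter_upwards [hIoo2, evsmall, evMw] with r hr hsm hwM
    have hr0 : 0 < r := hr.1
    have hr1 : r < 1/2 := hr.2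
    have hlogr : Real.log r < 0 := Real.log_neg hr0 (by linarith)
    have hnlogr : 0 < -Real.log r := by linarith
    have h2r0 : 0 < 2 * r := by linarith
    have h2r1 : 2 * r < 1 := by linarith
    have hlog2r : Real.log (2 * r) = Real.log 2 + Real.log r :=
      Real.log_mul two_ne_zero hr0.ne'
    have hn2r : -Real.log (2 * r) ≠ 0 := by
      have := Real.log_neg h2r0 h2r1
      intro hcon
      linarith [neg_eq_zero.1 hcon]
    have hwval : Real.log ((coverNum E (2 * r) : ℝ)) = w r * (-Real.log (2 * r)) :=
      (div_mul_cancel₀ _ hn2r).symm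
    have hKB : (Real.log (coverNum E (2 * r)) - Real.log K) / (-Real.log r) ≤ g r :=
      keyB hb ⟨x₀, hx₀⟩ hE hr0 (by linarith) hK1 hK
    have harith : w r - c' / (-Real.log r) ≤
        (Real.log (coverNum E (2 * r)) - Real.log K) / (-Real.log r) := by
      have e1 : w r - c' / (-Real.log r) = (w r * (-Real.log r) - c') / (-Real.log r) := by
        field_simp [hlogr.ne]
        ring
      rw [e1, div_le_div_iff_of_pos_right hnlogr, hwval, hlog2r]
      have hmul : w r * Real.log 2 ≤ M * Real.log 2 :=
        mul_le_mul_of_nonneg_right hwM (Real.log_nonneg (by norm_num))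
      have hexp : w r * -(Real.log 2 + Real.log r) =
          -(w r * Real.log 2) + w r * (-Real.log r) := by ring
      rw [hexp, hc']
      linarith [hmul]
    have : w r - ε ≤ w r - c' / (-Real.log r) := by linarith
    exact this.trans (harith.trans hKB)
  -- boundedness packages
  have bdd_u_ge : l.IsBoundedUnder (· ≥ ·) u := isBoundedUnder_of_eventually_ge ev0u
  have bdd_u_le : l.IsBoundedUnder (· ≤ ·) u := isBoundedUnder_of_eventually_le hMev
  have bdd_g_ge : l.IsBoundedUnder (· ≥ ·) g := isBoundedUnder_of_eventually_ge ev0g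
  have bdd_g_le : l.IsBoundedUnder (· ≤ ·) g := isBoundedUnder_of_eventually_le evMg
  have bdd_w_ge : l.IsBoundedUnder (· ≥ ·) w := isBoundedUnder_of_eventually_ge ev0w
  have bdd_w_le : l.IsBoundedUnder (· ≤ ·) w := isBoundedUnder_of_eventually_le evMw
  have hlimw : liminf w l = liminf u l := by
    calc liminf w l = liminf u (Filter.map (fun r : ℝ => 2 * r) l) :=
          (liminf_map_eq l (fun r : ℝ => 2 * r) u).symm
      _ = liminf u l := by rw [hmap]
  have hlimsupw : limsup w l = limsup u l := by
    calc limsup w l = limsup u (Filter.map (fun r : ℝ => 2 * r) l) :=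
          (limsup_map_eq l (fun r : ℝ => 2 * r) u).symm
      _ = limsup u l := by rw [hmap]
  -- liminf equality
  have liminf_le : liminf g l ≤ liminf u l :=
    liminf_le_liminf ev1 bdd_g_ge bdd_u_le.isCoboundedUnder_ge
  have liminf_ge : liminf u l ≤ liminf g l := by
    refine real_le_of_forall_pos fun ε hε => ?_
    have h1 : liminf (fun r => w r + (-ε)) l ≤ liminf g l := by
      refine liminf_le_liminf ?_ ?_ bdd_g_le.isCoboundedUnder_ge
      · filter_upwards [ev2 ε hε] with r h using by linarith
      · exact isBoundedUnder_of_eventually_ge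
          (ev0w.mono fun r h => (by linarith : -ε ≤ w r + (-ε)))
    have h2 : liminf (fun r => w r + (-ε)) l = liminf w l + (-ε) :=
      liminf_add_const l w (-ε) bdd_w_le.isCoboundedUnder_ge bdd_w_ge
    rw [h2, hlimw] at h1
    linarith
  have hliminf : liminf u l = liminf g l := le_antisymm liminf_ge liminf_le
  -- limsup equality
  have limsup_le : limsup g l ≤ limsup u l :=
    limsup_le_limsup ev1 bdd_g_ge.isCoboundedUnder_le bdd_u_le
  have limsup_ge : limsup u l ≤ limsup g l := by
    refine real_le_of_forall_pos fun ε hε => ?_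
    have h1 : limsup (fun r => w r + (-ε)) l ≤ limsup g l := by
      refine limsup_le_limsup ?_ ?_ bdd_g_le
      · filter_upwards [ev2 ε hε] with r h using by linarith
      · exact (isBoundedUnder_of_eventually_ge
          (ev0w.mono fun r h => by linarith : ∀ᶠ r in l, -ε ≤ w r + (-ε))).isCoboundedUnder_le
    have h2 : limsup (fun r => w r + (-ε)) l = limsup w l + (-ε) :=
      limsup_add_const l w (-ε) bdd_w_le bdd_w_ge.isCoboundedUnder_le
    rw [h2, hlimsupw] at h1
    linarith
  have hlimsup : limsup u l = limsup g l := le_antisymm limsup_ge limsup_le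
  constructor
  · show lbd E = liminf g l
    rw [show lbd E = liminf u l from rfl, hliminf]
  · show ubd E = limsup g l
    rw [show ubd E = limsup u l from rfl, hlimsup]
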